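/- With Γ = Γ(γ̃, θ̃, x, y) the 4×4 complex matrix defined below, suppose γ̃ = γ (i.e. the fake-path channel coefficient equals the true one, δ_γ = 0). Then the determinant of the entrywise real part factorizes as det(Re Γ) = |γ|⁸ · cos²θ · cos²θ̃ · Λ⁻⁴ · D₁ · D₂, where D₁ = (O₁O₆ + Re(M₁(y)M₆(x)))·(O₄O₅ + Re(M₄(x)M₅(y))) − (O₂O₃ + Re(M₂(y)M₃(x)))² and D₂ = (O₁O₆ − Re(M₁(y)M₆(x)))·(O₄O₅ − Re(M₄(x)M₅(y))) − (O₂O₃ − Re(M₂(y)M₃(x)))². -/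

import Mathlib

open Real

noncomputable section

/-- `O₁ = N(N−1)(2N−1)/6`. -/
def O₁ (N : ℕ) : ℝ := (N : ℝ) * ((N : ℝ) - 1) * (2 * (N : ℝ) - 1) / 6
/-- `O₂ = N(N−1)/2`. -/
def O₂ (N : ℕ) : ℝ := (N : ℝ) * ((N : ℝ) - 1) / 2
/-- `O₃ = (N_t−1)/2`. -/
def O₃ (Nt : ℕ) : ℝ := ((Nt : ℝ) - 1) / 2
/-- `O₄ = (N_t−1)(2N_t−1)/6`. -/
def O₄ (Nt : ℕ) : ℝ := ((Nt : ℝ) - 1) * (2 * (Nt : ℝ) - 1) / 6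
/-- `O₅ = N`. -/
def O₅ (N : ℕ) : ℝ := (N : ℝ)
/-- `O₆ = 1`. -/
def O₆ (Nt : ℕ) : ℝ := 1

/-- `M₁(y) = Σ_{n<N} n² e^{−2πiny}`. -/
def M₁ (N : ℕ) (y : ℝ) : ℂ :=
  ∑ n ∈ Finset.range N, (n : ℂ) ^ 2 * Complex.exp (-(2 * (π : ℂ) * Complex.I * n * y))
/-- `M₂(y) = Σ_{n<N} n e^{−2πiny}`. -/
def M₂ (N : ℕ) (y : ℝ) : ℂ :=
  ∑ n ∈ Finset.range N, (n : ℂ) * Complex.exp (-(2 * (π : ℂ) * Complex.I * n * y))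
/-- `M₃(x) = (1/N_t) Σ_{m<N_t} m e^{2πimx}`. -/
def M₃ (Nt : ℕ) (x : ℝ) : ℂ :=
  (Nt : ℂ)⁻¹ * ∑ m ∈ Finset.range Nt, (m : ℂ) * Complex.exp (2 * (π : ℂ) * Complex.I * m * x)
/-- `M₄(x) = (1/N_t) Σ_{m<N_t} m² e^{2πimx}`. -/
def M₄ (Nt : ℕ) (x : ℝ) : ℂ :=
  (Nt : ℂ)⁻¹ * ∑ m ∈ Finset.range Nt, (m : ℂ) ^ 2 * Complex.exp (2 * (π : ℂ) * Complex.I * m * x)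
/-- `M₅(y) = Σ_{n<N} e^{−2πiny}`. -/
def M₅ (N : ℕ) (y : ℝ) : ℂ :=
  ∑ n ∈ Finset.range N, Complex.exp (-(2 * (π : ℂ) * Complex.I * n * y))
/-- `M₆(x) = (1/N_t) Σ_{m<N_t} e^{2πimx}`. -/
def M₆ (Nt : ℕ) (x : ℝ) : ℂ :=
  (Nt : ℂ)⁻¹ * ∑ m ∈ Finset.range Nt, Complex.exp (2 * (π : ℂ) * Complex.I * m * x)

/-- The 4×4 matrix `Γ(γ̃, θ̃, x, y)` of Equation (22) of the paper (depending on the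
fixed data `N`, `N_t`, `Λ`, `γ`, `θ`), whose scaled entrywise real part is the
asymptotic Fisher information matrix `J̆^{(ζ_k)}` of the TOA–AOD parameters of one
true path and its fake copy. -/
def Γmat (N Nt : ℕ) (Λ : ℝ) (γ : ℂ) (θ : ℝ) (γt : ℂ) (θt x y : ℝ) :
    Matrix (Fin 4) (Fin 4) ℂ :=
  !![((O₁ N * O₆ Nt * ‖γ‖ ^ 2 : ℝ) : ℂ),
     ((-(O₂ N * O₃ Nt * ‖γ‖ ^ 2 * Real.cos θ / Λ) : ℝ) : ℂ),
     M₁ N y * M₆ Nt x * (starRingEnd ℂ) γ * γt,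
     -(M₂ N y * M₃ Nt x * (starRingEnd ℂ) γ * γt * ((Real.cos θt : ℝ) : ℂ) / ((Λ : ℝ) : ℂ));
     ((-(O₂ N * O₃ Nt * ‖γ‖ ^ 2 * Real.cos θ / Λ) : ℝ) : ℂ),
     ((O₄ Nt * O₅ N * ‖γ‖ ^ 2 * Real.cos θ ^ 2 / Λ ^ 2 : ℝ) : ℂ),
     -(M₂ N y * M₃ Nt x * (starRingEnd ℂ) γ * γt * ((Real.cos θ : ℝ) : ℂ) / ((Λ : ℝ) : ℂ)),
     M₄ Nt x * M₅ N y * (starRingEnd ℂ) γ * γt * ((Real.cos θ * Real.cos θt : ℝ) : ℂ) / ((Λ ^ 2 : ℝ) : ℂ);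
     (starRingEnd ℂ) (M₁ N y * M₆ Nt x * (starRingEnd ℂ) γ * γt),
     (starRingEnd ℂ) (-(M₂ N y * M₃ Nt x * (starRingEnd ℂ) γ * γt * ((Real.cos θ : ℝ) : ℂ) / ((Λ : ℝ) : ℂ))),
     ((O₁ N * O₆ Nt * ‖γt‖ ^ 2 : ℝ) : ℂ),
     ((-(O₂ N * O₃ Nt * ‖γt‖ ^ 2 * Real.cos θt / Λ) : ℝ) : ℂ);
     (starRingEnd ℂ) (-(M₂ N y * M₃ Nt x * (starRingEnd ℂ) γ * γt * ((Real.cos θt : ℝ) : ℂ) / ((Λ : ℝ) : ℂ))),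
     (starRingEnd ℂ) (M₄ Nt x * M₅ N y * (starRingEnd ℂ) γ * γt * ((Real.cos θ * Real.cos θt : ℝ) : ℂ) / ((Λ ^ 2 : ℝ) : ℂ)),
     ((-(O₂ N * O₃ Nt * ‖γt‖ ^ 2 * Real.cos θt / Λ) : ℝ) : ℂ),
     ((O₄ Nt * O₅ N * ‖γt‖ ^ 2 * Real.cos θt ^ 2 / Λ ^ 2 : ℝ) : ℂ)]

private lemma my_det_fin_four (M : Matrix (Fin 4) (Fin 4) ℝ) :
    M.det =
      M 0 0 * (M 1 1 * (M 2 2 * M 3 3 - M 2 3 * M 3 2)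
             - M 1 2 * (M 2 1 * M 3 3 - M 2 3 * M 3 1)
             + M 1 3 * (M 2 1 * M 3 2 - M 2 2 * M 3 1))
    - M 0 1 * (M 1 0 * (M 2 2 * M 3 3 - M 2 3 * M 3 2)
             - M 1 2 * (M 2 0 * M 3 3 - M 2 3 * M 3 0)
             + M 1 3 * (M 2 0 * M 3 2 - M 2 2 * M 3 0))
    + M 0 2 * (M 1 0 * (M 2 1 * M 3 3 - M 2 3 * M 3 1)
             - M 1 1 * (M 2 0 * M 3 3 - M 2 3 * M 3 0)
             + M 1 3 * (M 2 0 * M 3 1 - M 2 1 * M 3 0))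
    - M 0 3 * (M 1 0 * (M 2 1 * M 3 2 - M 2 2 * M 3 1)
             - M 1 1 * (M 2 0 * M 3 2 - M 2 2 * M 3 0)
             + M 1 2 * (M 2 0 * M 3 1 - M 2 1 * M 3 0)) := by
  rw [Matrix.det_succ_row_zero]
  simp [Fin.sum_univ_succ, Matrix.det_fin_three, Fin.succAbove]
  ring

set_option maxHeartbeats 4000000 in
/-- **Determinant factorization underlying Proposition 3 (Equation (25)).**
When the fake channel coefficient equals the true one (`γ̃ = γ`, i.e. `δ_γ = 0`),
the determinant of the entrywise real part of `Γ` factorizes as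
`det(Re Γ) = |γ|⁸ cos²θ cos²θ̃ Λ⁻⁴ D₁ D₂`. -/
theorem det_re_gamma_factorization
    (N Nt : ℕ) (hN : 1 ≤ N) (hNt : 1 ≤ Nt) (Λ : ℝ) (hΛ : 0 < Λ)
    (γ : ℂ) (θ θt : ℝ)
    (hθ : θ ∈ Set.Ioo (-(π / 2)) (π / 2)) (hθt : θt ∈ Set.Ioo (-(π / 2)) (π / 2))
    (x y : ℝ) :
    ((Γmat N Nt Λ γ θ γ θt x y).map Complex.re).det
      = ‖γ‖ ^ 8 * Real.cos θ ^ 2 * Real.cos θt ^ 2 * (Λ ^ 4)⁻¹ *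
        ((O₁ N * O₆ Nt + (M₁ N y * M₆ Nt x).re) *
            (O₄ Nt * O₅ N + (M₄ Nt x * M₅ N y).re)
          - (O₂ N * O₃ Nt + (M₂ N y * M₃ Nt x).re) ^ 2) *
        ((O₁ N * O₆ Nt - (M₁ N y * M₆ Nt x).re) *
            (O₄ Nt * O₅ N - (M₄ Nt x * M₅ N y).re)
          - (O₂ N * O₃ Nt - (M₂ N y * M₃ Nt x).re) ^ 2) := by
  have hγ : (starRingEnd ℂ) γ * γ = ((‖γ‖ ^ 2 : ℝ) : ℂ) := by
    rw [Complex.conj_mul']; push_cast; ring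
  have key : ∀ (z : ℂ) (c d : ℝ), (z * (starRingEnd ℂ) γ * γ * (c:ℝ) / ((d:ℝ):ℂ)).re
      = z.re * (‖γ‖^2 * c / d) := by
    intro z c d
    rw [mul_assoc z, hγ, div_eq_mul_inv, ← Complex.ofReal_inv, mul_assoc, mul_assoc,
      ← Complex.ofReal_mul, ← Complex.ofReal_mul]
    simp only [Complex.mul_re, Complex.ofReal_re, Complex.ofReal_im, mul_zero, sub_zero]
    ring
  have key0 : ∀ z : ℂ, (z * (starRingEnd ℂ) γ * γ).re = z.re * ‖γ‖^2 := by
    intro z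
    rw [mul_assoc z, hγ]
    simp only [Complex.mul_re, Complex.ofReal_re, Complex.ofReal_im, mul_zero, sub_zero]
  have hΛ' : Λ ≠ 0 := ne_of_gt hΛ
  set a := ‖γ‖ ^ 2 with ha
  set r1 := (M₁ N y * M₆ Nt x).re with hr1
  set r2 := (M₂ N y * M₃ Nt x).re with hr2
  set r4 := (M₄ Nt x * M₅ N y).re with hr4
  have ha' : ‖γ‖ ^ 2 = a := by rw [ha]
  have hγ2 : γ * (starRingEnd ℂ) γ = ((‖γ‖ ^ 2 : ℝ) : ℂ) := by rw [mul_comm, hγ]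
  have keyc0 : ∀ z w : ℂ,
      ((starRingEnd ℂ) z * (starRingEnd ℂ) w * γ * (starRingEnd ℂ) γ).re = (z * w).re * a := by
    intro z w
    rw [mul_assoc ((starRingEnd ℂ) z * (starRingEnd ℂ) w), hγ2, ← map_mul]
    simp only [Complex.mul_re, Complex.ofReal_re, Complex.ofReal_im, mul_zero, sub_zero,
      Complex.conj_re, ha]
  have keyc : ∀ (z w : ℂ) (c : ℝ),
      ((starRingEnd ℂ) z * (starRingEnd ℂ) w * γ * (starRingEnd ℂ) γ * (c:ℝ)).re
        = (z * w).re * a * c := by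
    intro z w c
    rw [mul_assoc ((starRingEnd ℂ) z * (starRingEnd ℂ) w), hγ2, ← map_mul, mul_assoc,
      ← Complex.ofReal_mul]
    simp only [Complex.mul_re, Complex.ofReal_re, Complex.ofReal_im, mul_zero, sub_zero,
      Complex.conj_re, ha]
    ring
  have hM : (Γmat N Nt Λ γ θ γ θt x y).map Complex.re =
      !![O₁ N * O₆ Nt * a, -(O₂ N * O₃ Nt * a * Real.cos θ / Λ),
         r1 * a, -(r2 * (a * Real.cos θt / Λ));
         -(O₂ N * O₃ Nt * a * Real.cos θ / Λ), O₄ Nt * O₅ N * a * Real.cos θ ^ 2 / Λ ^ 2,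
         -(r2 * (a * Real.cos θ / Λ)), r4 * (a * (Real.cos θ * Real.cos θt) / Λ ^ 2);
         r1 * a, -(r2 * (a * Real.cos θ / Λ)),
         O₁ N * O₆ Nt * a, -(O₂ N * O₃ Nt * a * Real.cos θt / Λ);
         -(r2 * (a * Real.cos θt / Λ)), r4 * (a * (Real.cos θ * Real.cos θt) / Λ ^ 2),
         -(O₂ N * O₃ Nt * a * Real.cos θt / Λ), O₄ Nt * O₅ N * a * Real.cos θt ^ 2 / Λ ^ 2] := by
    ext i j
    fin_cases i <;> fin_cases j <;>
      simp [Γmat, Matrix.map_apply, key, key0, map_neg, -Complex.ofReal_mul,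
        -Complex.ofReal_pow, -Complex.ofReal_div, -Complex.ofReal_neg, -Complex.ofReal_inv,
        -Complex.ofReal_cos, -Complex.mul_re, -Complex.mul_im, ha', keyc0, keyc, ← hr1, ← hr2, ← hr4] <;> try ring
  rw [hM, my_det_fin_four]
  simp only [Matrix.cons_val', Matrix.cons_val_zero, Matrix.cons_val_one, Matrix.cons_val_two,
    Matrix.cons_val_three, Matrix.head_cons, Matrix.tail_cons, Matrix.empty_val',
    Matrix.cons_val_fin_one, Matrix.head_fin_const, Matrix.of_apply]
  rw [ha]
  field_simp
  ring

end
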